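/- Discrete RDSI generation theorem, part 2 (generated systems are RDSI's): Let θ be an MPDS with T = ℤ, 𝒰 a set of θ-inputs, and f: Ω × X × U → X a measurable map with f(ω,·,ũ) continuous for each (ω,ũ). Define φ recursively by φ(0,ω,x,u) := x and φ(n+1,ω,x,u) := f(θ_n ω, φ(n,ω,x,u), u_n(ω)). Then (θ,φ,𝒰) is an RDSI: φ satisfies axioms (I1), (I1'), (I2), (I3), (I4), and (I5). -/

import Mathlib

open MeasureTheory Filter

def concatProcN {Ω U : Type*} (θ : ℤ → Ω → Ω) (p : ℕ) (u v : ℕ → Ω → U) : ℕ → Ω → U :=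
  fun τ ω => if τ < p then u τ ω else v (τ - p) (θ (p : ℤ) ω)

/-- If `φ` is defined recursively from a generator `f` (measurable,
continuous in the state) by `φ(0,ω,x,u) = x`, `φ(n+1,ω,x,u) = f(θ_n ω, φ(n,ω,x,u), u_n(ω))`,
then `(θ,φ,𝒰)` is an RDSI: axioms (I1), (I1'), (I2), (I3), (I4), (I5) hold. -/
theorem generated_discrete_system_is_rdsi
    {Ω : Type*} [MeasurableSpace Ω]
    (θ : ℤ → Ω → Ω)
    (hθmeas : ∀ n, Measurable (θ n))
    (hθ0 : ∀ ω, θ 0 ω = ω)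
    (hθadd : ∀ m n : ℤ, ∀ ω, θ (m + n) ω = θ m (θ n ω))
    {X U : Type*} [MeasurableSpace X] [TopologicalSpace X] [MeasurableSpace U]
    [TopologicalSpace U]
    (𝒰 : Set (ℕ → Ω → U))
    (hconst : ∀ c : U, (fun (_ : ℕ) (_ : Ω) => c) ∈ 𝒰)
    (hconcat : ∀ u ∈ 𝒰, ∀ v ∈ 𝒰, ∀ p : ℕ, concatProcN θ p u v ∈ 𝒰)
    (hUmeas : ∀ u ∈ 𝒰, ∀ n : ℕ, Measurable (u n))
    (f : Ω → X → U → X)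
    (hG1 : Measurable fun p : Ω × X × U => f p.1 p.2.1 p.2.2)
    (hG2 : ∀ ω c, Continuous fun x => f ω x c)
    (φ : ℕ → Ω → X → (ℕ → Ω → U) → X)
    (hφ0 : ∀ ω x u, φ 0 ω x u = x)
    (hφrec : ∀ n : ℕ, ∀ ω x u, φ (n + 1) ω x u = f (θ (n : ℤ) ω) (φ n ω x u) (u n ω)) :
    -- (I1)
    (∀ u ∈ 𝒰, Measurable fun p : ℕ × Ω × X => φ p.1 p.2.1 p.2.2 u) ∧
    -- (I1')
    (Measurable fun p : ℕ × Ω × X × U => φ p.1 p.2.1 p.2.2.1 (fun _ _ => p.2.2.2)) ∧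
    -- (I2)
    (∀ n ω u, Continuous fun x => φ n ω x u) ∧
    -- (I3)
    (∀ ω x u, φ 0 ω x u = x) ∧
    -- (I4)
    (∀ p n : ℕ, ∀ ω x, ∀ u ∈ 𝒰, ∀ v ∈ 𝒰,
        φ (p + n) ω x (concatProcN θ p u v) = φ n (θ (p : ℤ) ω) (φ p ω x u) v) ∧
    -- (I5)
    (∀ n : ℕ, ∀ ω x, ∀ u ∈ 𝒰, ∀ v ∈ 𝒰,
        (∀ j : ℕ, j < n → u j ω = v j ω) → φ n ω x u = φ n ω x v) := by
  -- (I5) as a general lemma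
  have I5 : ∀ n : ℕ, ∀ ω x, ∀ u v : ℕ → Ω → U,
      (∀ j : ℕ, j < n → u j ω = v j ω) → φ n ω x u = φ n ω x v := by
    intro n
    induction n with
    | zero => intro ω x u v _; rw [hφ0, hφ0]
    | succ n ih =>
      intro ω x u v h
      rw [hφrec, hφrec, ih ω x u v (fun j hj => h j (Nat.lt_succ_of_lt hj)),
        h n (Nat.lt_succ_self n)]
  refine ⟨?_, ?_, ?_, hφ0, ?_, fun n ω x u _ v _ h => I5 n ω x u v h⟩
  · -- (I1)
    intro u hu
    have key : ∀ n : ℕ, Measurable fun q : Ω × X => φ n q.1 q.2 u := by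
      intro n
      induction n with
      | zero => simpa only [hφ0] using measurable_snd
      | succ n ih =>
        simp only [hφrec]
        exact hG1.comp (((hθmeas _).comp measurable_fst).prodMk
          (ih.prodMk ((hUmeas u hu n).comp measurable_fst)))
    have g : Measurable fun q : (Ω × X) × ℕ => φ q.2 q.1.1 q.1.2 u :=
      measurable_from_prod_countable_left (fun n => key n)
    exact g.comp (measurable_snd.prodMk measurable_fst)
  · -- (I1')
    have key : ∀ n : ℕ, Measurable fun q : Ω × X × U =>
        φ n q.1 q.2.1 (fun _ _ => q.2.2) := by
      intro n
      induction n with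
      | zero => simpa only [hφ0] using measurable_snd.fst
      | succ n ih =>
        simp only [hφrec]
        exact hG1.comp (((hθmeas _).comp measurable_fst).prodMk
          (ih.prodMk measurable_snd.snd))
    have g : Measurable fun q : (Ω × X × U) × ℕ =>
        φ q.2 q.1.1 q.1.2.1 (fun _ _ => q.1.2.2) :=
      measurable_from_prod_countable_left (fun n => key n)
    exact g.comp (measurable_snd.prodMk measurable_fst)
  · -- (I2)
    intro n ω u
    induction n with
    | zero => simpa only [hφ0] using continuous_id'
    | succ n ih =>
      simp only [hφrec]
      exact (hG2 _ _).comp ih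
  · -- (I4)
    intro p n ω x u hu v hv
    induction n with
    | zero =>
      rw [hφ0]
      exact I5 p ω x _ u (fun j hj => by
        simp [concatProcN, hj])
    | succ n ih =>
      have hlt : ¬ (p + n < p) := by omega
      have hth : θ ((↑(p + n) : ℤ)) ω = θ (n : ℤ) (θ (p : ℤ) ω) := by
        push_cast
        rw [add_comm, hθadd]
      calc φ (p + (n + 1)) ω x (concatProcN θ p u v)
          = f (θ ((↑(p + n) : ℤ)) ω) (φ (p + n) ω x (concatProcN θ p u v))
              (concatProcN θ p u v (p + n) ω) := by
            rw [show p + (n + 1) = (p + n) + 1 from rfl, hφrec]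
        _ = f (θ (n : ℤ) (θ (p : ℤ) ω)) (φ n (θ (p : ℤ) ω) (φ p ω x u) v)
              (v n (θ (p : ℤ) ω)) := by
            rw [hth, ih]
            simp [concatProcN, hlt]
        _ = φ (n + 1) (θ (p : ℤ) ω) (φ p ω x u) v := (hφrec n _ _ v).symm
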